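/- Let (X,d) be a finite metric space and h a chaining functional of log-concave type. Then γ*_h(X) ≤ Ent_h(X) ≤ 2·γ*_h(X) + diam(X)/e. -/

import Mathlib

open MeasureTheory

noncomputable section

/-- `f` is log-concave on `[0,∞)`. -/
def IsLogConcaveOn (f : ℝ → ℝ) : Prop :=
  ∀ x ∈ Set.Ici (0:ℝ), ∀ y ∈ Set.Ici (0:ℝ), ∀ t ∈ Set.Icc (0:ℝ) 1,
    f x ^ t * f y ^ (1 - t) ≤ f (t * x + (1 - t) * y)

/-- `f` is a continuous, non-increasing, log-concave probability density on `[0,∞)`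
normalized so that `f 0 = 1`. -/
structure IsChainingDensity (f : ℝ → ℝ) : Prop where
  nonneg : ∀ t : ℝ, 0 ≤ t → 0 ≤ f t
  continuousOn : ContinuousOn f (Set.Ici 0)
  antitoneOn : AntitoneOn f (Set.Ici 0)
  logConcave : IsLogConcaveOn f
  total : (∫ t in Set.Ioi (0:ℝ), f t) = 1
  normalized : f 0 = 1

/-- The complementary cumulative distribution function `F(s) = ∫_s^∞ f(t) dt`. -/
def ccdf (f : ℝ → ℝ) (s : ℝ) : ℝ := ∫ t in Set.Ioi s, f t

/-- The chaining functional `h(p) = F⁻¹(p)`, defined on `(0,1]` as the least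
`s ≥ 0` with `F(s) ≤ p`. -/
def chainFn (f : ℝ → ℝ) (p : ℝ) : ℝ := sInf {s : ℝ | 0 ≤ s ∧ ccdf f s ≤ p}

open scoped ENNReal

/-- The extended (`[0,∞]`-valued) chaining functional: `h(p)` is the least `s ≥ 0`
with `F(s) ≤ p`, and `+∞` when no such `s` exists (in particular
`h(0) = lim_{p→0⁺} h(p) ∈ (0,∞]`). -/
def chainFnE (f : ℝ → ℝ) (p : ℝ) : ℝ≥0∞ :=
  sInf {t : ℝ≥0∞ | ∃ s : ℝ, 0 ≤ s ∧ ccdf f s ≤ p ∧ t = ENNReal.ofReal s}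

/-- A probability measure on a finite set, given by its point masses. -/
def IsProbOn {X : Type*} [Fintype X] (μ : X → ℝ) : Prop :=
  (∀ x, 0 ≤ μ x) ∧ (∑ x, μ x) = 1

/-- The mass `μ(B(x,r))` of the closed ball of radius `r` around `x`. -/
def ballMass {X : Type*} [MetricSpace X] [Fintype X] (μ : X → ℝ) (x : X) (r : ℝ) : ℝ :=
  ∑ y ∈ Finset.univ.filter (fun y => dist x y ≤ r), μ y

/-- `∫₀^∞ h(μ(B(x,r))) dr`, valued in `[0,∞]`. -/
def Hint {X : Type*} [MetricSpace X] [Fintype X] (f : ℝ → ℝ) (μ : X → ℝ) (x : X) : ℝ≥0∞ :=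
  ∫⁻ r in Set.Ioi (0:ℝ), chainFnE f (ballMass μ x r)

/-- The diameter of the finite metric space `X`. -/
def fdiam (X : Type*) [MetricSpace X] : ℝ := Metric.diam (Set.univ : Set X)

/-- The dual functional `γ*_h(X) = sup_ν inf_μ Σ_x ν(x)·∫₀^∞ h(μ(B(x,r))) dr`. -/
def gammaStar (X : Type*) [MetricSpace X] [Fintype X] (f : ℝ → ℝ) : ℝ≥0∞ :=
  ⨆ ν : {m : X → ℝ // IsProbOn m}, ⨅ μ : {m : X → ℝ // IsProbOn m},
    ∑ x, ENNReal.ofReal (ν.1 x) * Hint f μ.1 x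

/-- The entropic dual `Ent_h(X) = sup_ν Σ_x ν(x)·∫₀^∞ h(ν(B(x,r))) dr`. -/
def entDual (X : Type*) [MetricSpace X] [Fintype X] (f : ℝ → ℝ) : ℝ≥0∞ :=
  ⨆ ν : {m : X → ℝ // IsProbOn m}, ∑ x, ENNReal.ofReal (ν.1 x) * Hint f ν.1 x


open Set

section CcdfLemmas

variable {f : ℝ → ℝ}

lemma IsChainingDensity.integrableOn (hf : IsChainingDensity f) :
    IntegrableOn f (Set.Ioi 0) := by
  by_contra h
  have := MeasureTheory.integral_undef h
  rw [hf.total] at this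
  norm_num at this

lemma IsChainingDensity.integrableOn_Ioi (hf : IsChainingDensity f) {s : ℝ} (hs : 0 ≤ s) :
    IntegrableOn f (Set.Ioi s) :=
  hf.integrableOn.mono_set (Ioi_subset_Ioi hs)

lemma ccdf_zero (hf : IsChainingDensity f) : ccdf f 0 = 1 := hf.total

lemma ccdf_nonneg (hf : IsChainingDensity f) {s : ℝ} (hs : 0 ≤ s) : 0 ≤ ccdf f s :=
  setIntegral_nonneg measurableSet_Ioi fun t ht => hf.nonneg t (hs.trans (le_of_lt ht))

lemma ccdf_split (hf : IsChainingDensity f) {a b : ℝ} (ha : 0 ≤ a) (hab : a ≤ b) :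
    ccdf f a = (∫ t in Set.Ioc a b, f t) + ccdf f b := by
  unfold ccdf
  rw [← setIntegral_union (Ioc_disjoint_Ioi le_rfl) measurableSet_Ioi
    ((hf.integrableOn_Ioi ha).mono_set Ioc_subset_Ioi_self)
    (hf.integrableOn_Ioi (ha.trans hab)), Ioc_union_Ioi_eq_Ioi hab]

lemma ccdf_antitone (hf : IsChainingDensity f) {a b : ℝ} (ha : 0 ≤ a) (hab : a ≤ b) :
    ccdf f b ≤ ccdf f a := by
  rw [ccdf_split hf ha hab]
  have : 0 ≤ ∫ t in Set.Ioc a b, f t :=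
    setIntegral_nonneg measurableSet_Ioc fun t ht => hf.nonneg t (ha.trans (le_of_lt ht.1))
  linarith

lemma ccdf_le_one (hf : IsChainingDensity f) {s : ℝ} (hs : 0 ≤ s) : ccdf f s ≤ 1 := by
  rw [← ccdf_zero hf]; exact ccdf_antitone hf le_rfl hs

lemma f_le_one (hf : IsChainingDensity f) {t : ℝ} (ht : 0 ≤ t) : f t ≤ 1 := by
  rw [← hf.normalized]; exact hf.antitoneOn (le_refl (0:ℝ)) ht ht

/-- Four point inequality from log-concavity. -/
lemma four_point (hf : IsChainingDensity f) {a b c d : ℝ} (ha : 0 ≤ a)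
    (hab : a ≤ b) (hac : a ≤ c) (hsum : a + d = b + c) :
    f a * f d ≤ f b * f c := by
  have hbd : b ≤ d := by linarith
  have hcd : c ≤ d := by linarith
  have hd : 0 ≤ d := ha.trans (hab.trans hbd)
  have hb : 0 ≤ b := ha.trans hab
  have hc : 0 ≤ c := ha.trans hac
  rcases eq_or_lt_of_le (hab.trans hbd) with had | had
  · have hba : b = a := le_antisymm (by linarith) hab
    have hca : c = a := le_antisymm (by linarith) hac
    rw [← had, hba, hca]
  · rcases le_or_gt (f d) 0 with hfd | hfd
    · have : f a * f d ≤ 0 := mul_nonpos_of_nonneg_of_nonpos (hf.nonneg a ha) hfd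
      exact this.trans (mul_nonneg (hf.nonneg b hb) (hf.nonneg c hc))
    have hfa : 0 < f a := lt_of_lt_of_le hfd (hf.antitoneOn ha hd (hab.trans hbd))
    set t : ℝ := (d - b) / (d - a) with ht_def
    have hda : (0:ℝ) < d - a := by linarith
    have ht0 : 0 ≤ t := div_nonneg (by linarith) hda.le
    have ht1 : t ≤ 1 := by rw [div_le_one hda]; linarith
    have htda : t * (d - a) = d - b := div_mul_cancel₀ _ hda.ne'
    have hbt : t * a + (1 - t) * d = b := by linear_combination (-1 : ℝ) * htda
    have hct : (1 - t) * a + t * d = c := by linear_combination htda + hsum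
    have h1 : f a ^ t * f d ^ (1 - t) ≤ f b := by
      have := hf.logConcave a ha d hd t ⟨ht0, ht1⟩
      rwa [hbt] at this
    have h2 : f a ^ (1 - t) * f d ^ t ≤ f c := by
      have h := hf.logConcave d hd a ha t ⟨ht0, ht1⟩
      rw [show t * d + (1 - t) * a = (1 - t) * a + t * d by ring, hct] at h
      rw [mul_comm]; exact h
    calc f a * f d = (f a ^ t * f d ^ (1 - t)) * (f a ^ (1 - t) * f d ^ t) := by
          rw [show (f a ^ t * f d ^ (1 - t)) * (f a ^ (1 - t) * f d ^ t)
              = (f a ^ t * f a ^ (1 - t)) * (f d ^ (1 - t) * f d ^ t) by ring,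
            ← Real.rpow_add hfa, ← Real.rpow_add hfd]
          norm_num
      _ ≤ f b * f c := mul_le_mul h1 h2
          (mul_nonneg (Real.rpow_nonneg (hf.nonneg a ha) _)
            (Real.rpow_nonneg (hf.nonneg d hd) _)) (hf.nonneg b hb)

end CcdfLemmas
section PartB
open Topology

variable {f : ℝ → ℝ}

lemma ccdf_eq_one_sub (hf : IsChainingDensity f) {u : ℝ} (hu : 0 ≤ u) :
    ccdf f u = 1 - ∫ t in Set.Ioc 0 u, f t := by
  have := ccdf_split hf le_rfl hu
  rw [ccdf_zero hf] at this
  linarith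

lemma ccdf_contOn (hf : IsChainingDensity f) (M : ℝ) :
    ContinuousOn (ccdf f) (Icc 0 M) := by
  have h1 : IntegrableOn f (Icc 0 M) := by
    rw [integrableOn_Icc_iff_integrableOn_Ioc]
    exact hf.integrableOn.mono_set Ioc_subset_Ioi_self
  have h2 : ContinuousOn (fun u => 1 - ∫ t in Set.Ioc 0 u, f t) (Icc 0 M) :=
    continuousOn_const.sub (intervalIntegral.continuousOn_primitive h1)
  exact h2.congr fun u hu => ccdf_eq_one_sub hf hu.1

lemma hasDerivAt_ccdf (hf : IsChainingDensity f) {s : ℝ} (hs : 0 < s) :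
    HasDerivAt (ccdf f) (-(f s)) s := by
  have hint : IntervalIntegrable f volume 0 s := by
    rw [intervalIntegrable_iff_integrableOn_Ioc_of_le hs.le]
    exact hf.integrableOn.mono_set Ioc_subset_Ioi_self
  have hmeas : StronglyMeasurableAtFilter f (𝓝 s) :=
    ⟨Set.Ioi 0, Ioi_mem_nhds hs, hf.integrableOn.aestronglyMeasurable⟩
  have hcont : ContinuousAt f s :=
    hf.continuousOn.continuousAt (Filter.mem_of_superset (Ioi_mem_nhds hs) Ioi_subset_Ici_self)
  have hd := (intervalIntegral.integral_hasDerivAt_right hint hmeas hcont).const_sub 1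
  apply hd.congr_of_eventuallyEq
  filter_upwards [Ioi_mem_nhds hs] with u hu
  rw [ccdf_eq_one_sub hf (le_of_lt hu), intervalIntegral.integral_of_le (le_of_lt hu)]

lemma integrableOn_shift (hf : IsChainingDensity f) {c : ℝ} (hc : 0 ≤ c) :
    IntegrableOn (fun w => f (c + w)) (Set.Ioi 0) := by
  have hm : MeasurableEmbedding (fun w : ℝ => c + w) := measurableEmbedding_addLeft c
  have hpre : (fun w : ℝ => c + w) ⁻¹' (Set.Ioi c) = Set.Ioi 0 := by
    ext w; simp
  have hmap : Measure.map (fun w : ℝ => c + w) (volume.restrict (Set.Ioi 0))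
      = volume.restrict (Set.Ioi c) := by
    rw [← hpre, ← Measure.restrict_map hm.measurable measurableSet_Ioi,
      (measurePreserving_add_left volume c).map_eq]
  have : Integrable f (Measure.map (fun w : ℝ => c + w) (volume.restrict (Set.Ioi 0))) := by
    rw [hmap]; exact hf.integrableOn_Ioi hc
  exact hm.integrable_map_iff.mp this

lemma ccdf_shift {c : ℝ} : ccdf f c = ∫ w in Set.Ioi (0:ℝ), f (c + w) := by
  have hpre : (fun w : ℝ => c + w) ⁻¹' (Set.Ioi c) = Set.Ioi 0 := by
    ext w; simp
  rw [ccdf, ← (measurePreserving_add_left volume c).setIntegral_preimage_emb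
    (measurableEmbedding_addLeft c) f (Set.Ioi c), hpre]

lemma hazard (hf : IsChainingDensity f) {s u : ℝ} (hs : 0 ≤ s) (hu : 0 ≤ u) :
    f u * ccdf f (s + u) ≤ f (s + u) * ccdf f u := by
  have hsu : 0 ≤ s + u := add_nonneg hs hu
  rw [ccdf_shift (c := s + u), ccdf_shift (c := u), ← MeasureTheory.integral_const_mul,
    ← MeasureTheory.integral_const_mul]
  apply setIntegral_mono_on ((integrableOn_shift hf hsu).const_mul _)
    ((integrableOn_shift hf hu).const_mul _) measurableSet_Ioi
  intro w hw
  have h4 := four_point hf (a := u) (b := u + w) (c := s + u) (d := s + u + w)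
    hu (by simp at hw ⊢; linarith) (by linarith) (by ring)
  calc f u * f (s + u + w) ≤ f (u + w) * f (s + u) := h4
    _ = f (s + u) * f (u + w) := by ring

lemma ccdf_submul (hf : IsChainingDensity f) {s t : ℝ} (hs : 0 ≤ s) (ht : 0 ≤ t) :
    ccdf f (s + t) ≤ ccdf f s * ccdf f t := by
  rcases eq_or_lt_of_le (ccdf_nonneg hf ht) with h0 | h0
  · have h1 : ccdf f (s + t) ≤ ccdf f t := ccdf_antitone hf ht (by linarith)
    calc ccdf f (s + t) ≤ 0 := by rw [← h0] at h1; exact h1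
      _ = ccdf f s * ccdf f t := by rw [← h0, mul_zero]
  · set η := fun u => ccdf f (s + u) / ccdf f u with hη
    have hpos : ∀ u ∈ Icc 0 t, 0 < ccdf f u := fun u hu =>
      lt_of_lt_of_le h0 (ccdf_antitone hf hu.1 hu.2)
    have hcont : ContinuousOn η (Icc 0 t) := by
      apply ContinuousOn.div
      · apply (ccdf_contOn hf (s + t)).comp (continuous_const.add continuous_id).continuousOn
        intro u hu
        exact ⟨by simp; linarith [hu.1], by simp; linarith [hu.2]⟩
      · exact (ccdf_contOn hf t)
      · exact fun u hu => (hpos u hu).ne'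
    have hderiv : ∀ u ∈ Set.Ioo 0 t, HasDerivAt η
        ((-(f (s + u)) * ccdf f u - ccdf f (s + u) * -(f u)) / (ccdf f u) ^ 2) u := by
      intro u hu
      have hd : HasDerivAt (ccdf f) (-(f (s + u))) (s + u) :=
        hasDerivAt_ccdf hf (by linarith [hu.1])
      have h1 : HasDerivAt (fun u => ccdf f (s + u)) (-(f (s + u))) u := by
        have := hd.comp u ((hasDerivAt_id u).const_add s)
        simpa [Function.comp_def] using this
      have h2 : HasDerivAt (ccdf f) (-(f u)) u := hasDerivAt_ccdf hf hu.1
      exact h1.div h2 (hpos u (Ioo_subset_Icc_self hu)).ne'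
    have hanti : AntitoneOn η (Icc 0 t) := by
      apply antitoneOn_of_deriv_nonpos (convex_Icc 0 t) hcont
      · intro u hu; rw [interior_Icc] at hu
        exact (hderiv u hu).differentiableAt.differentiableWithinAt
      · intro u hu; rw [interior_Icc] at hu
        rw [(hderiv u hu).deriv]
        apply div_nonpos_of_nonpos_of_nonneg _ (sq_nonneg _)
        have hz := hazard hf hs hu.1.le
        nlinarith [hz]
    have hend := hanti (left_mem_Icc.2 ht) (right_mem_Icc.2 ht) ht
    have hη0 : η 0 = ccdf f s := by
      simp only [hη, add_zero, ccdf_zero hf, div_one]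
    have hηt : η t = ccdf f (s + t) / ccdf f t := rfl
    rw [hη0, hηt, div_le_iff₀ h0] at hend
    exact hend

lemma f_eq_exp_lc (hf : IsChainingDensity f) {s c : ℝ} (hs : 0 < s)
    (hfs : 0 < f s) (hc : c = -Real.log (f s) / s) :
    (∀ t', s ≤ t' → f t' ≤ Real.exp (-(c * t'))) ∧
    (∀ t', 0 < t' → t' ≤ s → Real.exp (-(c * t')) ≤ f t') := by
  have hcs : c * s = -Real.log (f s) := by rw [hc]; field_simp
  have hexp : Real.exp (-(c * s)) = f s := by rw [hcs, neg_neg, Real.exp_log hfs]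
  have hrpow_exp : ∀ y : ℝ, Real.exp (-(c * s)) ^ y = Real.exp (-(c * s) * y) := by
    intro y
    rw [Real.rpow_def_of_pos (Real.exp_pos _), Real.log_exp]
  constructor
  · intro t' hst'
    have ht' : 0 < t' := lt_of_lt_of_le hs hst'
    have lc := hf.logConcave t' (le_of_lt ht') 0 (Set.mem_Ici.mpr le_rfl) (s / t')
      ⟨div_nonneg hs.le ht'.le, by rw [div_le_one ht']; exact hst'⟩
    rw [hf.normalized, Real.one_rpow, mul_one, mul_zero, add_zero,
      div_mul_cancel₀ _ ht'.ne'] at lc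
    have h1 : f t' = (f t' ^ (s / t')) ^ (t' / s) := by
      rw [← Real.rpow_mul (hf.nonneg t' ht'.le)]
      rw [show s / t' * (t' / s) = 1 by field_simp]
      exact (Real.rpow_one _).symm
    rw [h1]
    calc (f t' ^ (s / t')) ^ (t' / s) ≤ (f s) ^ (t' / s) :=
          Real.rpow_le_rpow (Real.rpow_nonneg (hf.nonneg t' ht'.le) _) lc
            (div_nonneg ht'.le hs.le)
      _ = Real.exp (-(c * t')) := by
          rw [← hexp, hrpow_exp]
          congr 1
          field_simp
  · intro t' ht'0 ht's
    have lc := hf.logConcave s hs.le 0 (Set.mem_Ici.mpr le_rfl) (t' / s)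
      ⟨div_nonneg ht'0.le hs.le, by rw [div_le_one hs]; exact ht's⟩
    rw [hf.normalized, Real.one_rpow, mul_one, mul_zero, add_zero,
      div_mul_cancel₀ _ hs.ne'] at lc
    calc Real.exp (-(c * t')) = Real.exp (-(c * s)) ^ (t' / s) := by
          rw [hrpow_exp]; congr 1; field_simp
      _ = f s ^ (t' / s) := by rw [hexp]
      _ ≤ f t' := lc

lemma ccdf_le_exp (hf : IsChainingDensity f) {s : ℝ} (hs : 0 ≤ s) :
    ccdf f s ≤ Real.exp (-s) := by
  rcases eq_or_lt_of_le hs with rfl | hs0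
  · rw [ccdf_zero hf]; simp
  rcases le_or_gt (f s) 0 with hfs | hfs
  · have : ccdf f s = ∫ t in Set.Ioi s, (0:ℝ) := by
      apply setIntegral_congr_fun measurableSet_Ioi
      intro t ht
      exact le_antisymm (le_trans (hf.antitoneOn hs (hs.trans (le_of_lt ht)) (le_of_lt ht)) hfs)
        (hf.nonneg t (hs.trans (le_of_lt ht)))
    rw [this]; simp [le_of_lt (Real.exp_pos _)]
  set c : ℝ := -Real.log (f s) / s with hc
  have hc0 : 0 ≤ c := by
    apply div_nonneg _ hs
    simp only [neg_nonneg]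
    exact Real.log_nonpos hfs.le (f_le_one hf hs)
  obtain ⟨hub, hlb⟩ := f_eq_exp_lc hf hs0 hfs hc
  rcases le_or_gt 1 c with hc1 | hc1
  · -- tail bound
    have hcpos : 0 < c := lt_of_lt_of_le one_pos hc1
    have hint1 : IntegrableOn (fun t => Real.exp (-(c * t))) (Set.Ioi s) := by
      have := exp_neg_integrableOn_Ioi s hcpos
      simpa [neg_mul] using this
    have hint2 : IntegrableOn (fun t => Real.exp (-(c - 1) * s) * Real.exp (-t)) (Set.Ioi s) := by
      apply Integrable.const_mul
      have := exp_neg_integrableOn_Ioi s one_pos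
      simpa [neg_mul, IntegrableOn] using this
    calc ccdf f s ≤ ∫ t in Set.Ioi s, Real.exp (-(c * t)) := by
          apply setIntegral_mono_on (hf.integrableOn_Ioi hs) hint1 measurableSet_Ioi
          intro t ht
          exact hub t (le_of_lt ht)
      _ ≤ ∫ t in Set.Ioi s, Real.exp (-(c - 1) * s) * Real.exp (-t) := by
          apply setIntegral_mono_on hint1 hint2 measurableSet_Ioi
          intro t ht
          rw [← Real.exp_add]
          apply Real.exp_le_exp.2
          have : s ≤ t := le_of_lt ht
          nlinarith
      _ = Real.exp (-(c - 1) * s) * Real.exp (-s) := by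
          rw [MeasureTheory.integral_const_mul, integral_exp_neg_Ioi]
      _ ≤ Real.exp (-s) := by
          rw [← Real.exp_add]
          apply Real.exp_le_exp.2
          nlinarith
  · -- head bound
    have hint1 : IntegrableOn (fun t => Real.exp (-(c * t))) (Set.Ioc 0 s) := by
      apply Continuous.integrableOn_Ioc
      exact Real.continuous_exp.comp (continuous_const.mul continuous_id).neg
    have hintf : IntegrableOn f (Set.Ioc 0 s) := hf.integrableOn.mono_set Ioc_subset_Ioi_self
    have hint2 : IntegrableOn (fun t => Real.exp (-t)) (Set.Ioc 0 s) := by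
      apply Continuous.integrableOn_Ioc
      exact Real.continuous_exp.comp continuous_neg
    have hsplit : (1:ℝ) = (∫ t in Set.Ioc 0 s, Real.exp (-t)) + Real.exp (-s) := by
      have hiIoi : IntegrableOn (fun t => Real.exp (-t)) (Set.Ioi 0) := by
        have := exp_neg_integrableOn_Ioi 0 one_pos
        simpa [neg_mul] using this
      have hiIois : IntegrableOn (fun t => Real.exp (-t)) (Set.Ioi s) :=
        hiIoi.mono_set (Ioi_subset_Ioi hs)
      have := setIntegral_union (Ioc_disjoint_Ioi (le_refl s)) measurableSet_Ioi
        (hiIoi.mono_set Ioc_subset_Ioi_self) hiIois (f := fun t => Real.exp (-t))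
      rw [Ioc_union_Ioi_eq_Ioi hs] at this
      rw [integral_exp_neg_Ioi, integral_exp_neg_Ioi] at this
      simpa using this
    have hmono1 : (∫ t in Set.Ioc 0 s, Real.exp (-t)) ≤ ∫ t in Set.Ioc 0 s, Real.exp (-(c * t)) := by
      apply setIntegral_mono_on hint2 hint1 measurableSet_Ioc
      intro t ht
      apply Real.exp_le_exp.2
      nlinarith [ht.1, hc0, hc1]
    have hmono2 : (∫ t in Set.Ioc 0 s, Real.exp (-(c * t))) ≤ ∫ t in Set.Ioc 0 s, f t := by
      apply setIntegral_mono_on hint1 hintf measurableSet_Ioc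
      intro t ht
      exact hlb t ht.1 ht.2
    rw [ccdf_eq_one_sub hf hs]
    linarith

end PartB
section PartC

variable {f : ℝ → ℝ}

lemma chainFnE_le {p s : ℝ} (hs : 0 ≤ s) (h : ccdf f s ≤ p) :
    chainFnE f p ≤ ENNReal.ofReal s := sInf_le ⟨s, hs, h, rfl⟩

lemma chainFnE_anti {p q : ℝ} (hpq : p ≤ q) : chainFnE f q ≤ chainFnE f p :=
  sInf_le_sInf fun _ ⟨s, h1, h2, h3⟩ => ⟨s, h1, h2.trans hpq, h3⟩

lemma chainFnE_of_one_le (hf : IsChainingDensity f) {p : ℝ} (hp : 1 ≤ p) : chainFnE f p = 0 := by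
  apply le_antisymm _ zero_le
  have := chainFnE_le (f := f) (p := p) le_rfl (by rw [ccdf_zero hf]; exact hp)
  simpa using this

lemma chainFnE_le_neg_log (hf : IsChainingDensity f) {p : ℝ} (hp : 0 < p) :
    chainFnE f p ≤ ENNReal.ofReal (-Real.log p) := by
  rcases le_or_gt 1 p with h1 | h1
  · rw [chainFnE_of_one_le hf h1]; exact zero_le
  · have hlog : 0 ≤ -Real.log p := neg_nonneg.2 (Real.log_nonpos hp.le h1.le)
    apply chainFnE_le hlog
    calc ccdf f (-Real.log p) ≤ Real.exp (-(-Real.log p)) := ccdf_le_exp hf hlog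
      _ = p := by rw [neg_neg, Real.exp_log hp]

lemma chainFnE_ne_top (hf : IsChainingDensity f) {p : ℝ} (hp : 0 < p) :
    chainFnE f p ≠ ⊤ :=
  ((chainFnE_le_neg_log hf hp).trans_lt ENNReal.ofReal_lt_top).ne

lemma chainFnE_mul (hf : IsChainingDensity f) {p q : ℝ} (hp : 0 < p) (hq : 0 < q) :
    chainFnE f (p * q) ≤ chainFnE f p + chainFnE f q := by
  apply ENNReal.le_of_forall_pos_le_add
  intro ε hε _
  have hε2 : (0:ℝ≥0∞) < (ε:ℝ≥0∞)/2 := ENNReal.half_pos (by exact_mod_cast hε.ne')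
  have h1 : chainFnE f p < chainFnE f p + (ε:ℝ≥0∞)/2 :=
    ENNReal.lt_add_right (chainFnE_ne_top hf hp) hε2.ne'
  have h2 : chainFnE f q < chainFnE f q + (ε:ℝ≥0∞)/2 :=
    ENNReal.lt_add_right (chainFnE_ne_top hf hq) hε2.ne'
  rw [chainFnE, sInf_lt_iff] at h1 h2
  obtain ⟨x1, ⟨s1, hs1, hF1, rfl⟩, hx1⟩ := h1
  obtain ⟨x2, ⟨s2, hs2, hF2, rfl⟩, hx2⟩ := h2
  have hkey : ccdf f (s1 + s2) ≤ p * q :=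
    (ccdf_submul hf hs1 hs2).trans
      (mul_le_mul hF1 hF2 (ccdf_nonneg hf hs2) hp.le)
  calc chainFnE f (p * q) ≤ ENNReal.ofReal (s1 + s2) := chainFnE_le (add_nonneg hs1 hs2) hkey
    _ = ENNReal.ofReal s1 + ENNReal.ofReal s2 := ENNReal.ofReal_add hs1 hs2
    _ ≤ (chainFnE f p + (ε:ℝ≥0∞)/2) + (chainFnE f q + (ε:ℝ≥0∞)/2) :=
        add_le_add hx1.le hx2.le
    _ = chainFnE f p + chainFnE f q + ε := by
        rw [add_add_add_comm, ENNReal.add_halves]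

lemma chainFnE_decomp (hf : IsChainingDensity f) {p q : ℝ} (hp : 0 < p) (hq : 0 < q) :
    chainFnE f q ≤ chainFnE f p + chainFnE f (min 1 (q / p)) := by
  have hmin : 0 < min 1 (q / p) := lt_min one_pos (div_pos hq hp)
  have hle : p * min 1 (q / p) ≤ q := by
    rcases min_cases 1 (q / p) with ⟨h, hge⟩ | ⟨h, hle'⟩
    · rw [h, mul_one]
      have := (le_div_iff₀ hp).mp hge; linarith
    · rw [h, mul_div_cancel₀ _ hp.ne']
  calc chainFnE f q ≤ chainFnE f (p * min 1 (q / p)) := chainFnE_anti hle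
    _ ≤ _ := chainFnE_mul hf hp hmin

lemma chainFnE_min_le (hf : IsChainingDensity f) {q : ℝ} (hq : 0 < q) :
    chainFnE f (min 1 q) ≤ ENNReal.ofReal (1 / (Real.exp 1 * q)) := by
  rcases le_or_gt 1 q with h1 | h1
  · rw [min_eq_left h1, chainFnE_of_one_le hf le_rfl]; exact zero_le
  · rw [min_eq_right h1.le]
    refine (chainFnE_le_neg_log hf hq).trans (ENNReal.ofReal_le_ofReal ?_)
    have he : 0 < Real.exp 1 * q := mul_pos (Real.exp_pos 1) hq
    have hlog : Real.log (1 / (Real.exp 1 * q)) ≤ 1 / (Real.exp 1 * q) - 1 :=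
      Real.log_le_sub_one_of_pos (by positivity)
    have heq : -Real.log q = Real.log (1 / (Real.exp 1 * q)) + 1 := by
      rw [Real.log_div one_ne_zero he.ne', Real.log_one,
        Real.log_mul (Real.exp_ne_zero 1) hq.ne', Real.log_exp]
      ring
    linarith

end PartC
section PartD

variable {X : Type*} [MetricSpace X] [Fintype X]

lemma ballMass_nonneg {μ : X → ℝ} (hμ : ∀ x, 0 ≤ μ x) (x : X) (r : ℝ) :
    0 ≤ ballMass μ x r := Finset.sum_nonneg fun y _ => hμ y

lemma ballMass_mono_r {μ : X → ℝ} (hμ : ∀ x, 0 ≤ μ x) (x : X) :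
    Monotone (ballMass μ x) := by
  intro r r' hrr'
  apply Finset.sum_le_sum_of_subset_of_nonneg
  · intro y hy
    simp only [Finset.mem_filter] at *
    exact ⟨hy.1, hy.2.trans hrr'⟩
  · exact fun y _ _ => hμ y

lemma self_le_ballMass {μ : X → ℝ} (hμ : ∀ x, 0 ≤ μ x) (x : X) {r : ℝ} (hr : 0 ≤ r) :
    μ x ≤ ballMass μ x r :=
  Finset.single_le_sum (fun y _ => hμ y) (by simp [dist_self, hr])

lemma mem_le_ballMass {μ : X → ℝ} (hμ : ∀ x, 0 ≤ μ x) {x y : X} {r : ℝ}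
    (hxy : dist x y ≤ r) : μ y ≤ ballMass μ x r :=
  Finset.single_le_sum (fun z _ => hμ z) (by simp [hxy])

lemma ballMass_subset {ν : X → ℝ} (hν : ∀ x, 0 ≤ ν x) {x y : X} {r : ℝ}
    (hxy : dist x y ≤ r) : ballMass ν y r ≤ ballMass ν x (2 * r) := by
  apply Finset.sum_le_sum_of_subset_of_nonneg _ fun z _ _ => hν z
  intro z hz
  simp only [Finset.mem_filter, Finset.mem_univ, true_and] at *
  calc dist x z ≤ dist x y + dist y z := dist_triangle ..
    _ ≤ 2 * r := by linarith

lemma ballMass_eq_one {ν : X → ℝ} (hν : IsProbOn ν) {x : X} {r : ℝ}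
    (h : ∀ y, dist x y ≤ r) : ballMass ν x r = 1 := by
  rw [ballMass, Finset.filter_true_of_mem fun y _ => h y]
  exact hν.2

lemma sum_ratio_le_one {μ ν : X → ℝ} (hμ : IsProbOn μ) (hν : IsProbOn ν) {r : ℝ}
    (hr : 0 ≤ r) :
    ∑ x, ν x * ballMass μ x r / ballMass ν x (2 * r) ≤ 1 := by
  set G : X → X → ℝ := fun x y =>
    if dist x y ≤ r then ν x * μ y / ballMass ν y r else 0 with hG
  have hGnn : ∀ x y, 0 ≤ G x y := by
    intro x y
    rw [hG]
    simp only []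
    split
    · exact div_nonneg (mul_nonneg (hν.1 x) (hμ.1 y)) (ballMass_nonneg hν.1 y r)
    · exact le_rfl
  have step1 : ∀ x : X, ν x * ballMass μ x r / ballMass ν x (2 * r) ≤ ∑ y, G x y := by
    intro x
    rcases eq_or_lt_of_le (hν.1 x) with hx0 | hx0
    · rw [← hx0, zero_mul, zero_div]
      exact Finset.sum_nonneg fun y _ => hGnn x y
    · calc ν x * ballMass μ x r / ballMass ν x (2 * r)
          = ∑ y ∈ Finset.univ.filter (fun y => dist x y ≤ r),
              ν x * μ y / ballMass ν x (2 * r) := by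
            rw [ballMass, Finset.mul_sum, Finset.sum_div]
        _ ≤ ∑ y ∈ Finset.univ.filter (fun y => dist x y ≤ r), G x y := by
            apply Finset.sum_le_sum
            intro y hy
            simp only [Finset.mem_filter, Finset.mem_univ, true_and] at hy
            rw [hG]
            simp only [if_pos hy]
            have hb1 : 0 < ballMass ν y r :=
              lt_of_lt_of_le hx0 (mem_le_ballMass hν.1 (by rw [dist_comm]; exact hy))
            have hb2 : ballMass ν y r ≤ ballMass ν x (2 * r) := ballMass_subset hν.1 hy
            exact div_le_div_of_nonneg_left (mul_nonneg hx0.le (hμ.1 y)) hb1 hb2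
        _ ≤ ∑ y, G x y :=
            Finset.sum_le_sum_of_subset_of_nonneg (Finset.filter_subset _ _)
              fun y _ _ => hGnn x y
  have step3 : ∀ y : X, (∑ x, G x y) ≤ μ y := by
    intro y
    have : (∑ x, G x y) = ∑ x ∈ Finset.univ.filter (fun x => dist x y ≤ r),
        ν x * μ y / ballMass ν y r := by
      rw [Finset.sum_filter]
    rw [this, ← Finset.sum_div, ← Finset.sum_mul]
    have hsum : (∑ x ∈ Finset.univ.filter (fun x => dist x y ≤ r), ν x) = ballMass ν y r := by
      rw [ballMass]
      apply Finset.sum_congr _ fun _ _ => rfl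
      ext z
      simp [dist_comm]
    rw [hsum]
    rcases eq_or_lt_of_le (ballMass_nonneg hν.1 y r) with hb | hb
    · rw [← hb, zero_mul, zero_div]
      exact hμ.1 y
    · rw [mul_comm, mul_div_assoc, div_self hb.ne', mul_one]
  calc (∑ x, ν x * ballMass μ x r / ballMass ν x (2 * r)) ≤ ∑ x, ∑ y, G x y :=
        Finset.sum_le_sum fun x _ => step1 x
    _ = ∑ y, ∑ x, G x y := Finset.sum_comm
    _ ≤ ∑ y, μ y := Finset.sum_le_sum fun y _ => step3 y
    _ = 1 := hμ.2

end PartD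
section PartE

open scoped ENNReal

variable {f : ℝ → ℝ}

lemma per_x (hf : IsChainingDensity f) {νx p q : ℝ} (hνx : 0 ≤ νx) (hq : νx ≤ q)
    (hp : 0 ≤ p) :
    ENNReal.ofReal νx * chainFnE f q ≤
      ENNReal.ofReal νx * chainFnE f p +
        ENNReal.ofReal (νx * p / q / Real.exp 1) := by
  rcases eq_or_lt_of_le hνx with h0 | h0
  · rw [← h0, ENNReal.ofReal_zero, zero_mul]
    exact zero_le
  have hq0 : 0 < q := lt_of_lt_of_le h0 hq
  rcases eq_or_lt_of_le hp with hp0 | hp0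
  · have : chainFnE f q ≤ chainFnE f p := chainFnE_anti (by linarith)
    exact le_add_right (mul_le_mul_right this _)
  · have hdec := chainFnE_decomp hf hp0 hq0
    have hmin := chainFnE_min_le hf (div_pos hq0 hp0)
    calc ENNReal.ofReal νx * chainFnE f q
        ≤ ENNReal.ofReal νx * (chainFnE f p + chainFnE f (min 1 (q / p))) :=
          mul_le_mul_right hdec _
      _ = ENNReal.ofReal νx * chainFnE f p +
            ENNReal.ofReal νx * chainFnE f (min 1 (q / p)) := by rw [mul_add]
      _ ≤ ENNReal.ofReal νx * chainFnE f p +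
            ENNReal.ofReal νx * ENNReal.ofReal (1 / (Real.exp 1 * (q / p))) := by
          exact add_le_add_right (mul_le_mul_right hmin _) _
      _ = ENNReal.ofReal νx * chainFnE f p +
            ENNReal.ofReal (νx * p / q / Real.exp 1) := by
          rw [← ENNReal.ofReal_mul hνx]
          congr 1
          rw [show νx * (1 / (Real.exp 1 * (q / p))) = νx * p / q / Real.exp 1 by
            field_simp]

lemma per_r {X : Type*} [MetricSpace X] [Fintype X] (hf : IsChainingDensity f)
    {μ ν : X → ℝ} (hμ : IsProbOn μ) (hν : IsProbOn ν) {r : ℝ} (hr : 0 < r) :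
    (∑ x, ENNReal.ofReal (ν x) * chainFnE f (ballMass ν x (2 * r))) ≤
      (∑ x, ENNReal.ofReal (ν x) * chainFnE f (ballMass μ x r)) +
      (Set.Ioo 0 (fdiam X / 2)).indicator (fun _ => ENNReal.ofReal (1 / Real.exp 1)) r := by
  rcases le_or_gt (fdiam X / 2) r with hD | hD
  · have hone : ∀ x : X, ballMass ν x (2 * r) = 1 := by
      intro x
      apply ballMass_eq_one hν
      intro y
      refine (Metric.dist_le_diam_of_mem Set.finite_univ.isBounded
        (Set.mem_univ x) (Set.mem_univ y)).trans ?_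
      show fdiam X ≤ 2 * r
      linarith
    have hz : ∀ x : X, ENNReal.ofReal (ν x) * chainFnE f (ballMass ν x (2 * r)) = 0 := by
      intro x
      rw [hone x, chainFnE_of_one_le hf le_rfl, mul_zero]
    rw [Finset.sum_congr rfl fun x _ => hz x, Finset.sum_const_zero]
    exact zero_le
  · rw [Set.indicator_of_mem (Set.mem_Ioo.mpr ⟨hr, hD⟩)]
    have h2r : (0:ℝ) ≤ 2 * r := by linarith
    calc (∑ x, ENNReal.ofReal (ν x) * chainFnE f (ballMass ν x (2 * r)))
        ≤ ∑ x, (ENNReal.ofReal (ν x) * chainFnE f (ballMass μ x r) +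
            ENNReal.ofReal (ν x * ballMass μ x r / ballMass ν x (2 * r) / Real.exp 1)) := by
          apply Finset.sum_le_sum
          intro x _
          exact per_x hf (hν.1 x) (self_le_ballMass hν.1 x h2r) (ballMass_nonneg hμ.1 x r)
      _ = (∑ x, ENNReal.ofReal (ν x) * chainFnE f (ballMass μ x r)) +
            ∑ x, ENNReal.ofReal (ν x * ballMass μ x r / ballMass ν x (2 * r) / Real.exp 1) :=
          Finset.sum_add_distrib
      _ ≤ (∑ x, ENNReal.ofReal (ν x) * chainFnE f (ballMass μ x r)) +
            ENNReal.ofReal (1 / Real.exp 1) := by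
          apply add_le_add_right
          rw [← ENNReal.ofReal_sum_of_nonneg fun x _ => by
            have h1 := hν.1 x
            have h2 := ballMass_nonneg hμ.1 x r
            have h3 := ballMass_nonneg hν.1 x (2*r)
            positivity]
          apply ENNReal.ofReal_le_ofReal
          rw [show (∑ x, ν x * ballMass μ x r / ballMass ν x (2 * r) / Real.exp 1)
              = (∑ x, ν x * ballMass μ x r / ballMass ν x (2 * r)) / Real.exp 1 by
            rw [← Finset.sum_div]]
          gcongr
          exact sum_ratio_le_one hμ hν hr.le

end PartE
section PartF

open scoped ENNReal

variable {f : ℝ → ℝ}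

lemma meas_chain {X : Type*} [MetricSpace X] [Fintype X] {μ : X → ℝ}
    (hμ : ∀ x, 0 ≤ μ x) (x : X) :
    Measurable fun r => chainFnE f (ballMass μ x r) := by
  have h : Antitone fun r => chainFnE f (ballMass μ x r) :=
    fun _ _ hrr' => chainFnE_anti (ballMass_mono_r hμ x hrr')
  exact h.measurable

lemma sum_Hint_eq {X : Type*} [MetricSpace X] [Fintype X] {w μ : X → ℝ}
    (hμ : ∀ x, 0 ≤ μ x) :
    (∑ x, ENNReal.ofReal (w x) * Hint f μ x)
      = ∫⁻ r in Set.Ioi (0:ℝ), ∑ x, ENNReal.ofReal (w x) * chainFnE f (ballMass μ x r) := by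
  calc (∑ x, ENNReal.ofReal (w x) * Hint f μ x)
      = ∑ x, ∫⁻ r in Set.Ioi (0:ℝ), ENNReal.ofReal (w x) * chainFnE f (ballMass μ x r) :=
        Finset.sum_congr rfl fun x _ =>
          (MeasureTheory.lintegral_const_mul' _ _ ENNReal.ofReal_ne_top).symm
    _ = _ := (MeasureTheory.lintegral_finset_sum _
          fun x _ => (meas_chain hμ x).const_mul _).symm

lemma lintegral_Ioi_double (g : ℝ → ℝ≥0∞) (hg : Measurable g) :
    ∫⁻ r in Set.Ioi (0:ℝ), g r = 2 * ∫⁻ r in Set.Ioi (0:ℝ), g (2 * r) := by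
  have h2 : (2:ℝ) ≠ 0 := two_ne_zero
  have hpre : (fun r : ℝ => 2 * r) ⁻¹' (Set.Ioi 0) = Set.Ioi 0 := by
    ext r
    simp only [Set.mem_preimage, Set.mem_Ioi]
    constructor <;> intro h <;> linarith
  have hmap : Measure.map (fun r : ℝ => 2 * r) (volume.restrict (Set.Ioi 0))
      = (ENNReal.ofReal |(2:ℝ)⁻¹| • volume).restrict (Set.Ioi 0) := by
    conv_lhs => rw [← hpre]
    rw [← Measure.restrict_map (measurable_const_mul 2) measurableSet_Ioi,
      Real.map_volume_mul_left h2]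
  have hml := MeasureTheory.lintegral_map hg (measurable_const_mul 2)
    (μ := volume.restrict (Set.Ioi (0:ℝ)))
  rw [hmap, Measure.restrict_smul, MeasureTheory.lintegral_smul_measure] at hml
  rw [← hml, smul_eq_mul, ← mul_assoc]
  have hone : (2:ℝ≥0∞) * ENNReal.ofReal |(2:ℝ)⁻¹| = 1 := by
    rw [abs_of_pos (by norm_num : (0:ℝ) < 2⁻¹), ENNReal.ofReal_inv_of_pos two_pos,
      ENNReal.ofReal_ofNat]
    exact ENNReal.mul_inv_cancel (by norm_num) (by norm_num)
  rw [hone, one_mul]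

lemma main_bound {X : Type*} [MetricSpace X] [Fintype X] (hf : IsChainingDensity f)
    {μ ν : X → ℝ} (hμ : IsProbOn μ) (hν : IsProbOn ν) :
    (∑ x, ENNReal.ofReal (ν x) * Hint f ν x) ≤
      2 * (∑ x, ENNReal.ofReal (ν x) * Hint f μ x) +
        ENNReal.ofReal (fdiam X / Real.exp 1) := by
  have hGνm : Measurable fun r : ℝ => ∑ x, ENNReal.ofReal (ν x) * chainFnE f (ballMass ν x r) :=
    Finset.measurable_sum _ fun x _ => (meas_chain hν.1 x).const_mul _
  rw [sum_Hint_eq hν.1, sum_Hint_eq hμ.1, lintegral_Ioi_double _ hGνm]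
  have hstep : (∫⁻ r in Set.Ioi (0:ℝ),
        ∑ x, ENNReal.ofReal (ν x) * chainFnE f (ballMass ν x (2 * r)))
      ≤ ∫⁻ r in Set.Ioi (0:ℝ),
          ((∑ x, ENNReal.ofReal (ν x) * chainFnE f (ballMass μ x r)) +
          (Set.Ioo (0:ℝ) (fdiam X / 2)).indicator
            (fun _ => ENNReal.ofReal (1 / Real.exp 1)) r) := by
    apply MeasureTheory.setLIntegral_mono' measurableSet_Ioi
    intro r hr
    exact per_r hf hμ hν hr
  have hind : Measurable ((Set.Ioo (0:ℝ) (fdiam X / 2)).indicator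
      (fun _ => ENNReal.ofReal (1 / Real.exp 1))) :=
    measurable_const.indicator measurableSet_Ioo
  have hie : (∫⁻ r in Set.Ioi (0:ℝ),
        ((∑ x, ENNReal.ofReal (ν x) * chainFnE f (ballMass μ x r)) +
          (Set.Ioo (0:ℝ) (fdiam X / 2)).indicator
            (fun _ => ENNReal.ofReal (1 / Real.exp 1)) r))
      = (∫⁻ r in Set.Ioi (0:ℝ), ∑ x, ENNReal.ofReal (ν x) * chainFnE f (ballMass μ x r)) +
          ENNReal.ofReal (1 / Real.exp 1) * ENNReal.ofReal (fdiam X / 2) := by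
    rw [MeasureTheory.lintegral_add_right _ hind]
    congr 1
    rw [MeasureTheory.lintegral_indicator measurableSet_Ioo,
      Measure.restrict_restrict measurableSet_Ioo,
      Set.inter_eq_left.mpr Set.Ioo_subset_Ioi_self,
      MeasureTheory.setLIntegral_const, Real.volume_Ioo, sub_zero]
  calc 2 * (∫⁻ r in Set.Ioi (0:ℝ),
        ∑ x, ENNReal.ofReal (ν x) * chainFnE f (ballMass ν x (2 * r)))
      ≤ 2 * ((∫⁻ r in Set.Ioi (0:ℝ),
          ∑ x, ENNReal.ofReal (ν x) * chainFnE f (ballMass μ x r)) +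
          ENNReal.ofReal (1 / Real.exp 1) * ENNReal.ofReal (fdiam X / 2)) :=
        mul_le_mul_right (hstep.trans_eq hie) 2
    _ = 2 * (∫⁻ r in Set.Ioi (0:ℝ),
          ∑ x, ENNReal.ofReal (ν x) * chainFnE f (ballMass μ x r)) +
          ENNReal.ofReal (fdiam X / Real.exp 1) := by
        rw [mul_add]
        congr 1
        rw [← ENNReal.ofReal_mul (by positivity : (0:ℝ) ≤ 1 / Real.exp 1),
          show (2:ℝ≥0∞) = ENNReal.ofReal 2 from (ENNReal.ofReal_ofNat 2).symm,
          ← ENNReal.ofReal_mul (by norm_num : (0:ℝ) ≤ 2)]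
        congr 1
        field_simp

end PartF


/-- `γ*_h(X) ≤ Ent_h(X) ≤ 2·γ*_h(X) + diam(X)/e`. -/
theorem stmt4 {X : Type*} [MetricSpace X] [Fintype X] [Nonempty X]
    (f : ℝ → ℝ) (hf : IsChainingDensity f) :
    gammaStar X f ≤ entDual X f ∧
    entDual X f ≤ 2 * gammaStar X f + ENNReal.ofReal (fdiam X / Real.exp 1) := by
  constructor
  · exact iSup_mono fun ν => iInf_le _ ν
  · apply iSup_le
    intro ν
    set c := ENNReal.ofReal (fdiam X / Real.exp 1) with hc
    set b := ⨅ μ : {m : X → ℝ // IsProbOn m},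
        ∑ x, ENNReal.ofReal (ν.1 x) * Hint f μ.1 x with hb
    have h2b : (∑ x, ENNReal.ofReal (ν.1 x) * Hint f ν.1 x) ≤ 2 * b + c := by
      apply ENNReal.le_of_forall_pos_le_add
      intro ε hε hlt
      have hbne : b ≠ ⊤ := by
        intro hbt
        rw [hbt, ENNReal.mul_top (by norm_num), top_add] at hlt
        exact lt_irrefl _ hlt
      have hε2 : (0:ℝ≥0∞) < (ε:ℝ≥0∞)/2 := ENNReal.half_pos (by exact_mod_cast hε.ne')
      have hlt2 : b < b + (ε:ℝ≥0∞)/2 := ENNReal.lt_add_right hbne hε2.ne'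
      rw [hb, iInf_lt_iff] at hlt2
      obtain ⟨μ, hμlt⟩ := hlt2
      calc (∑ x, ENNReal.ofReal (ν.1 x) * Hint f ν.1 x)
          ≤ 2 * (∑ x, ENNReal.ofReal (ν.1 x) * Hint f μ.1 x) + c := main_bound hf μ.2 ν.2
        _ ≤ 2 * (b + (ε:ℝ≥0∞)/2) + c := by gcongr
        _ = 2 * b + c + ε := by
            rw [mul_add, show (2:ℝ≥0∞) * ((ε:ℝ≥0∞)/2) = ε from
              ENNReal.mul_div_cancel two_ne_zero ENNReal.ofNat_ne_top, add_right_comm]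
    refine h2b.trans ?_
    gcongr
    exact le_iSup (fun ν' : {m : X → ℝ // IsProbOn m} =>
      ⨅ μ : {m : X → ℝ // IsProbOn m}, ∑ x, ENNReal.ofReal (ν'.1 x) * Hint f μ.1 x) ν
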